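/- Let a group G act on a set X with a global cross section Z whose common isotropy subgroup is G_0, and suppose there are subgroups H and K of G such that every g ∈ G can be written uniquely as g = hk with h ∈ H, k ∈ K, and G_0 ≤ K. Then the action of H on X (by restriction) is free, and Z̃ = KZ = {kz : k ∈ K, z ∈ Z} is a cross section for the action of H on X. -/

import Mathlib

/-- let `G` act on `X` with a global cross section `Z` whose common
isotropy subgroup is `G₀`, and let `H`, `K` be subgroups of `G` such that every `g ∈ G`
is uniquely `g = h * k` (`h ∈ H`, `k ∈ K`) and `G₀ ≤ K`. Then the action of `H` on `X`
is free, and `Z̃ = KZ = {k • z : k ∈ K, z ∈ Z}` is a cross section for this action. -/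
theorem stmt_10 {G X : Type*} [Group G] [MulAction G X]
    (G₀ : Subgroup G) (Z : Set X)
    (hcross : ∀ x : X, ∃! z, z ∈ Z ∧ z ∈ MulAction.orbit G x)
    (hglobal : ∀ z ∈ Z, MulAction.stabilizer G z = G₀)
    (H K : Subgroup G) (hG₀K : G₀ ≤ K)
    (huniq : ∀ g : G, ∃! p : H × K, (p.1 : G) * (p.2 : G) = g) :
    (∀ x : X, MulAction.stabilizer H x = ⊥) ∧
    (∀ x : X, ∃! w, w ∈ {w : X | ∃ k ∈ K, ∃ z ∈ Z, w = k • z} ∧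
        w ∈ MulAction.orbit H x) := by
  constructor
  · intro x
    ext h
    simp only [Subgroup.mem_bot, MulAction.mem_stabilizer_iff]
    constructor
    · intro hx
      obtain ⟨z, ⟨hzZ, g, hg⟩, -⟩ := hcross x
      -- hg : g • x = z
      have hx' : (h : G) • x = x := hx
      have hc : g * (h : G) * g⁻¹ ∈ MulAction.stabilizer G z := by
        rw [MulAction.mem_stabilizer_iff, ← hg]
        rw [mul_smul, mul_smul, inv_smul_smul, hx']
      rw [hglobal z hzZ] at hc
      have hcK : g * (h : G) * g⁻¹ ∈ K := hG₀K hc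
      obtain ⟨⟨h₁, k₁⟩, hdec, -⟩ := huniq g⁻¹
      replace hdec : (h₁ : G) * (k₁ : G) = g⁻¹ := hdec
      obtain ⟨p, hp, hpu⟩ := huniq ((h : G) * g⁻¹)
      have e1 : p = (h * h₁, k₁) := by
        apply (hpu _ _).symm
        show ((h * h₁ : H) : G) * (k₁ : G) = (h : G) * g⁻¹
        push_cast
        rw [mul_assoc, hdec]
      have e2 : p = (h₁, k₁ * ⟨_, hcK⟩) := by
        apply (hpu _ _).symm
        show (h₁ : G) * ((k₁ * ⟨_, hcK⟩ : K) : G) = (h : G) * g⁻¹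
        push_cast
        rw [← mul_assoc, hdec]
        group
      have hh1 : (h : G) * h₁ = h₁ := by
        have := congrArg (fun a : H × K => (a.1 : G)) (e1.symm.trans e2)
        simpa using this
      exact Subtype.ext (mul_eq_right.mp hh1)
    · rintro rfl; simp
  · intro x
    obtain ⟨z, ⟨hzZ, g, hg⟩, hzuniq⟩ := hcross x
    obtain ⟨⟨h, k⟩, hdec, -⟩ := huniq g⁻¹
    replace hdec : (h : G) * (k : G) = g⁻¹ := hdec
    replace hg : g • x = z := hg
    have hx : x = ((h : G) * (k : G)) • z := by
      rw [hdec, ← hg, inv_smul_smul]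
    refine ⟨(k : G) • z, ⟨⟨k, k.2, z, hzZ, rfl⟩, h⁻¹, ?_⟩, ?_⟩
    · show ((h⁻¹ : H) : G) • x = (k : G) • z
      rw [hx, mul_smul]
      push_cast
      rw [inv_smul_smul]
    · rintro w' ⟨⟨k', hk'K, z', hz'Z, rfl⟩, h', hh'⟩
      -- hh' : h' • x = k' • z'
      have hh'' : ((h' : G)) • x = k' • z' := hh'
      have hz'orb : z' ∈ MulAction.orbit G x :=
        ⟨k'⁻¹ * (h' : G), by show (k'⁻¹ * (h' : G)) • x = z'
                             rw [mul_smul, hh'', inv_smul_smul]⟩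
      have hz'z : z' = z := hzuniq z' ⟨hz'Z, hz'orb⟩
      rw [hz'z] at hh'' ⊢
      -- (h'⁻¹ k') • z = x = (h k) • z
      have hstab : ((h : G) * (k : G))⁻¹ * ((h' : G)⁻¹ * k') ∈ MulAction.stabilizer G z := by
        rw [MulAction.mem_stabilizer_iff, mul_smul, mul_smul]
        rw [← hh'', inv_smul_smul, hx, inv_smul_smul]
      have hcz0 : (((h : G) * (k : G))⁻¹ * ((h' : G)⁻¹ * k')) • z = z := hstab
      rw [hglobal z hzZ] at hstab
      have hcK : ((h : G) * (k : G))⁻¹ * ((h' : G)⁻¹ * k') ∈ K := hG₀K hstab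
      set c : G := ((h : G) * (k : G))⁻¹ * ((h' : G)⁻¹ * k') with hcdef
      obtain ⟨p, hp, hpu⟩ := huniq ((h' : G)⁻¹ * k')
      have e1 : p = (h'⁻¹, ⟨k', hk'K⟩) := by
        apply (hpu _ _).symm
        show ((h'⁻¹ : H) : G) * ((⟨k', hk'K⟩ : K) : G) = (h' : G)⁻¹ * k'
        push_cast
        rfl
      have e2 : p = (h, k * ⟨c, hcK⟩) := by
        apply (hpu _ _).symm
        show (h : G) * ((k * ⟨c, hcK⟩ : K) : G) = (h' : G)⁻¹ * k'
        push_cast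
        rw [hcdef]
        group
      have ek : (k' : G) = (k : G) * c := by
        have := e1.symm.trans e2
        have h2 := congrArg Prod.snd this
        exact congrArg (fun a : K => (a : G)) h2
      rw [ek, mul_smul, hcz0]
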